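/- For every rational number $q = c/d$ with positive integers $c, d$, there exists a finite simple non-complete graph $G$ with $I'(G) = q$, namely $G = K_c \vee ((d+1) K_1)$. -/

import Mathlib

open SimpleGraph

noncomputable def isoCount {V : Type*} (G : SimpleGraph V) (S : Set V) : ℕ :=
  {v | v ∉ S ∧ ∀ w, G.Adj v w → w ∈ S}.ncard

noncomputable def isoTough {V : Type*} [Fintype V] (G : SimpleGraph V) : ℝ :=
  sInf {x : ℝ | ∃ S : Set V, 2 ≤ isoCount G S ∧ x = (S.ncard : ℝ) / (isoCount G S : ℝ)}

noncomputable def isoToughVar {V : Type*} [Fintype V] (G : SimpleGraph V) : ℝ :=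
  sInf {x : ℝ | ∃ S : Set V, 2 ≤ isoCount G S ∧ x = (S.ncard : ℝ) / ((isoCount G S : ℝ) - 1)}

/-- The join `K_c ∨ (d K_1)`. -/
def joinKE (c d : ℕ) : SimpleGraph (Fin c ⊕ Fin d) where
  Adj x y := x ≠ y ∧ (x.isLeft ∨ y.isLeft)
  symm := ⟨by intro x y h; tauto⟩
  loopless := ⟨by intro x h; exact h.1 rfl⟩

/-- The star `K_{1,n-1}`: join of one center with `n-1` leaves. -/
def starGraph (n : ℕ) : SimpleGraph (Fin 1 ⊕ Fin (n-1)) := joinKE 1 (n-1)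

/-- The graph `G_l = K_{l-1} ∨ (l K_k)`. -/
def Gl (k l : ℕ) : SimpleGraph (Fin (l-1) ⊕ Fin l × Fin k) where
  Adj x y := x ≠ y ∧ (x.isLeft ∨ y.isLeft ∨
    ∃ i p q, x = Sum.inr (i, p) ∧ y = Sum.inr (i, q))
  symm := by
    constructor
    rintro x y ⟨h1, h2⟩
    refine ⟨h1.symm, ?_⟩
    rcases h2 with h | h | ⟨i, p, q, hx, hy⟩
    · tauto
    · tauto
    · exact Or.inr (Or.inr ⟨i, q, p, hy, hx⟩)
  loopless := ⟨fun x h => h.1 rfl⟩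

noncomputable instance GlDec (k l : ℕ) : DecidableRel (Gl k l).Adj := Classical.decRel _



section isoAux

variable {c d : ℕ}

lemma joinKE_left_mem (S : Set (Fin c ⊕ Fin (d+1)))
    (hS : 2 ≤ isoCount (joinKE c (d+1)) S) (a : Fin c) : Sum.inl a ∈ S := by
  by_contra ha
  have hsub : {v | v ∉ S ∧ ∀ w, (joinKE c (d+1)).Adj v w → w ∈ S} ⊆ {Sum.inl a} := by
    intro v ⟨hv, hiso⟩
    by_contra hne
    exact ha (hiso (Sum.inl a) ⟨fun h => hne (by simp [← h]), Or.inr rfl⟩)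
  have h1 : isoCount (joinKE c (d+1)) S ≤ 1 := by
    simpa [isoCount] using Set.ncard_le_ncard hsub (Set.finite_singleton _)
  omega

lemma joinKE_iso_eq (S : Set (Fin c ⊕ Fin (d+1))) (hL : ∀ a : Fin c, Sum.inl a ∈ S) :
    {v | v ∉ S ∧ ∀ w, (joinKE c (d+1)).Adj v w → w ∈ S}
      = Sum.inr '' {j : Fin (d+1) | Sum.inr j ∉ S} := by
  ext v
  constructor
  · rintro ⟨hv, _⟩
    cases v with
    | inl a => exact absurd (hL a) hv
    | inr j => exact ⟨j, hv, rfl⟩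
  · rintro ⟨j, hj, rfl⟩
    refine ⟨hj, fun w hw => ?_⟩
    obtain ⟨hne, h⟩ := hw
    rcases h with h | h
    · simp at h
    · cases w with
      | inl a => exact hL a
      | inr j' => simp at h

lemma joinKE_count_struct (S : Set (Fin c ⊕ Fin (d+1)))
    (hS : 2 ≤ isoCount (joinKE c (d+1)) S) :
    ∃ t : ℕ, t + 2 ≤ d + 1 ∧ S.ncard = c + t ∧
      isoCount (joinKE c (d+1)) S = d + 1 - t := by
  have hL := joinKE_left_mem S hS
  set T : Set (Fin (d+1)) := {j | Sum.inr j ∈ S} with hT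
  have hiso : isoCount (joinKE c (d+1)) S = Tᶜ.ncard := by
    rw [isoCount, joinKE_iso_eq S hL,
      Set.ncard_image_of_injective _ Sum.inr_injective]
    rfl
  have hcard : T.ncard + Tᶜ.ncard = d + 1 := by
    rw [Set.ncard_add_ncard_compl]
    simp [Nat.card_eq_fintype_card]
  refine ⟨T.ncard, by omega, ?_, by omega⟩
  have hSdecomp : S = Set.range (Sum.inl : Fin c → Fin c ⊕ Fin (d+1)) ∪ Sum.inr '' T := by
    ext v
    cases v with
    | inl a => simp [hL a]
    | inr j => simp [hT]
  rw [hSdecomp, Set.ncard_union_eq]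
  · congr 1
    · rw [← Set.image_univ, Set.ncard_image_of_injective _ Sum.inl_injective,
        Set.ncard_univ]
      simp
    · exact Set.ncard_image_of_injective _ Sum.inr_injective
  · refine Set.disjoint_left.mpr ?_
    rintro x ⟨a, rfl⟩ ⟨j, _, h⟩
    simp at h

end isoAux

theorem isoToughVar_surjective_on_rationals (c d : ℕ) (hc : 1 ≤ c) (hd : 1 ≤ d) :
    ∃ (V : Type) (_ : Fintype V) (G : SimpleGraph V),
      G ≠ ⊤ ∧ isoToughVar G = (c : ℝ) / (d : ℝ) := by
  refine ⟨Fin c ⊕ Fin (d+1), inferInstance, joinKE c (d+1), ?_, ?_⟩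
  · intro hT
    have h01 : (⟨0, by omega⟩ : Fin (d+1)) ≠ ⟨1, by omega⟩ := by
      simp [Fin.ext_iff]
    have hadj : (joinKE c (d+1)).Adj (Sum.inr ⟨0, by omega⟩) (Sum.inr ⟨1, by omega⟩) := by
      rw [hT]
      exact fun h => h01 (Sum.inr_injective h)
    obtain ⟨-, h⟩ := hadj
    simp at h
  · set G := joinKE c (d+1) with hG
    set X : Set ℝ := {x : ℝ | ∃ S : Set (Fin c ⊕ Fin (d+1)), 2 ≤ isoCount G S ∧
      x = (S.ncard : ℝ) / ((isoCount G S : ℝ) - 1)} with hX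
    have hL0 : ∀ a : Fin c, Sum.inl a ∈ Set.range (Sum.inl : Fin c → Fin c ⊕ Fin (d+1)) :=
      fun a => ⟨a, rfl⟩
    have hcount0 : isoCount G (Set.range (Sum.inl : Fin c → Fin c ⊕ Fin (d+1))) = d + 1 := by
      rw [hG, isoCount, joinKE_iso_eq _ hL0,
        Set.ncard_image_of_injective _ Sum.inr_injective]
      have : {j : Fin (d+1) | Sum.inr j ∉ Set.range (Sum.inl : Fin c → Fin c ⊕ Fin (d+1))}
          = Set.univ := by
        ext j; simp
      rw [this, Set.ncard_univ]
      simp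
    have hncard0 : (Set.range (Sum.inl : Fin c → Fin c ⊕ Fin (d+1))).ncard = c := by
      rw [← Set.image_univ, Set.ncard_image_of_injective _ Sum.inl_injective,
        Set.ncard_univ]
      simp
    have hmem : (c : ℝ) / (d : ℝ) ∈ X := by
      refine ⟨Set.range Sum.inl, by omega, ?_⟩
      rw [hcount0, hncard0]
      push_cast
      ring_nf
    have hlb : ∀ x ∈ X, (c : ℝ) / (d : ℝ) ≤ x := by
      rintro x ⟨S, hS2, rfl⟩
      obtain ⟨t, ht, hcardS, hcnt⟩ := joinKE_count_struct S hS2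
      rw [hcardS, hcnt]
      have htd : (t : ℝ) ≤ (d : ℝ) - 1 := by
        have : t ≤ d - 1 := by omega
        have hd1 : (1:ℝ) ≤ (d:ℝ) := by exact_mod_cast hd
        calc (t : ℝ) ≤ ((d - 1 : ℕ) : ℝ) := by exact_mod_cast this
          _ ≤ (d : ℝ) - 1 := by
            have : ((d - 1 : ℕ) : ℝ) = (d : ℝ) - 1 := by
              rw [Nat.cast_sub hd]; simp
            linarith [this.le]
      have hcast : ((d + 1 - t : ℕ) : ℝ) = (d : ℝ) + 1 - t := by
        have : t ≤ d + 1 := by omega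
        push_cast [Nat.cast_sub this]
        ring
      rw [hcast]
      have hdpos : (0:ℝ) < (d : ℝ) := by exact_mod_cast hd
      have hdenpos : (0:ℝ) < (d : ℝ) + 1 - t - 1 := by linarith
      rw [div_le_div_iff₀ hdpos (by linarith)]
      have hc0 : (0:ℝ) ≤ (c : ℝ) := Nat.cast_nonneg c
      have ht0 : (0:ℝ) ≤ (t : ℝ) := Nat.cast_nonneg t
      push_cast
      nlinarith
    rw [isoToughVar]
    apply le_antisymm
    · exact csInf_le ⟨(c:ℝ)/(d:ℝ), hlb⟩ hmem
    · exact le_csInf ⟨_, hmem⟩ hlb
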